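/- Let μ_n^J be the laws of the vectors (l(Y_{[nt_1]})/n,...,l(Y_{[nt_j]})/n). Suppose there exist ρ > 0, γ ∈ ℝ, x ∈ ℝ^j, and a strictly increasing sequence of positive integers (n_m) with n_{m+1}/n_m → 1 such that μ_{n_m}^J(B(x,ρ)) ≥ exp(n_m γ) for all m ≥ 1. Then for every δ > ρ, liminf_{n→∞} (1/n) log μ_n^J(B(x,δ)) ≥ γ. -/

import Mathlib

open MeasureTheory Filter
open scoped ENNReal

/-- The free product of `d` copies of `ℤ/2ℤ`; its Cayley graph is the `d`-regular tree. -/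
abbrev FP (d : ℕ) : Type := Monoid.CoprodI (fun _ : Fin d => Multiplicative (ZMod 2))

/-- The generator `a_i`. -/
noncomputable def gen (d : ℕ) (i : Fin d) : FP d :=
  Monoid.CoprodI.of (i := i) (Multiplicative.ofAdd (1 : ZMod 2))

/-- The generating set `S = {a_1, …, a_d}`. -/
def genSet (d : ℕ) : Set (FP d) := Set.range (gen d)

/-- The word length `l(g)` with respect to `S`. -/
noncomputable def wl (d : ℕ) (g : FP d) : ℕ :=
  sInf {n | ∃ L : List (FP d), (∀ x ∈ L, x ∈ genSet d) ∧ L.length = n ∧ L.prod = g}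

lemma gen_mul_self (d : ℕ) (i : Fin d) : gen d i * gen d i = 1 := by
  unfold gen
  rw [← map_mul, ← ofAdd_add]
  have : (1 + 1 : ZMod 2) = 0 := by decide
  rw [this, ofAdd_zero, map_one]

lemma genSet_mul_self {d : ℕ} {s : FP d} (hs : s ∈ genSet d) : s * s = 1 := by
  obtain ⟨i, rfl⟩ := hs; exact gen_mul_self d i

lemma prod_mul_reverse_prod {d : ℕ} (L : List (FP d)) (hL : ∀ x ∈ L, x ∈ genSet d) :
    L.prod * L.reverse.prod = 1 := by
  induction L with
  | nil => simp
  | cons a L ih =>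
    have ha : a ∈ genSet d := hL a (List.mem_cons_self)
    have hL' : ∀ x ∈ L, x ∈ genSet d := fun x hx => hL x (List.mem_cons_of_mem _ hx)
    simp only [List.prod_cons, List.reverse_cons, List.prod_append, List.prod_cons,
      List.prod_nil, mul_one]
    rw [mul_assoc, ← mul_assoc L.prod, ih hL', one_mul, genSet_mul_self ha]

lemma wl_le_length {d : ℕ} (L : List (FP d)) (hL : ∀ x ∈ L, x ∈ genSet d) :
    wl d L.prod ≤ L.length :=
  Nat.sInf_le ⟨L, hL, rfl, rfl⟩

lemma wl_exists {d : ℕ} (g : FP d) (L0 : List (FP d)) (hL0 : ∀ x ∈ L0, x ∈ genSet d)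
    (hprod : L0.prod = g) :
    ∃ L : List (FP d), (∀ x ∈ L, x ∈ genSet d) ∧ L.length = wl d g ∧ L.prod = g :=
  Nat.sInf_mem (s := {n | ∃ L : List (FP d), (∀ x ∈ L, x ∈ genSet d) ∧ L.length = n ∧ L.prod = g})
    ⟨L0.length, L0, hL0, rfl, hprod⟩

section Y
variable {d : ℕ} {Ω : Type*} (X : ℕ → Ω → FP d) (hX : ∀ i ω, X i ω ∈ genSet d)
  (Y : ℕ → Ω → FP d)
  (hY : ∀ n ω, Y n ω = ((List.range n).map (fun k => X (k + 1) ω)).prod)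

include hX hY

lemma Ylist_mem (n : ℕ) (ω : Ω) :
    ∀ x ∈ (List.range n).map (fun k => X (k + 1) ω), x ∈ genSet d := by
  intro x hx
  obtain ⟨k, _, rfl⟩ := List.mem_map.mp hx
  exact hX _ ω

lemma wl_Y_le (n : ℕ) (ω : Ω) : wl d (Y n ω) ≤ n := by
  rw [hY]
  have := wl_le_length _ (Ylist_mem X hX Y hY n ω)
  simpa using this

lemma wl_Y_diff (ω : Ω) {b a : ℕ} (hba : b ≤ a) :
    wl d (Y a ω) ≤ wl d (Y b ω) + (a - b) ∧ wl d (Y b ω) ≤ wl d (Y a ω) + (a - b) := by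
  obtain ⟨c, rfl⟩ := Nat.exists_eq_add_of_le hba
  rw [Nat.add_sub_cancel_left]
  set M : List (FP d) := (List.range c).map (fun k => X (b + k + 1) ω) with hM
  have hMlen : M.length = c := by simp [hM]
  have hMmem : ∀ x ∈ M, x ∈ genSet d := by
    intro x hx
    obtain ⟨k, _, rfl⟩ := List.mem_map.mp hx
    exact hX _ ω
  have hsplit : Y (b + c) ω = Y b ω * M.prod := by
    rw [hY, hY, List.range_add, List.map_append, List.prod_append]
    congr 1
    rw [hM, List.map_map]
    rfl

  have hMrev := prod_mul_reverse_prod M hMmem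
  have hsplit2 : Y b ω = Y (b + c) ω * M.reverse.prod := by
    rw [hsplit, mul_assoc, hMrev, mul_one]
  constructor
  · obtain ⟨L, hLmem, hLlen, hLprod⟩ := wl_exists (Y b ω) _ (Ylist_mem X hX Y hY b ω)
      (hY b ω).symm
    have h1 : wl d ((L ++ M).prod) ≤ (L ++ M).length := by
      apply wl_le_length
      intro x hx
      rcases List.mem_append.mp hx with h | h
      exacts [hLmem x h, hMmem x h]
    rwa [List.prod_append, hLprod, ← hsplit, List.length_append, hLlen, hMlen] at h1
  · obtain ⟨L, hLmem, hLlen, hLprod⟩ := wl_exists (Y (b + c) ω) _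
      (Ylist_mem X hX Y hY (b + c) ω) (hY (b + c) ω).symm
    have h1 : wl d ((L ++ M.reverse).prod) ≤ (L ++ M.reverse).length := by
      apply wl_le_length
      intro x hx
      rcases List.mem_append.mp hx with h | h
      exacts [hLmem x h, hMmem x (List.mem_reverse.mp h)]
    rwa [List.prod_append, hLprod, ← hsplit2, List.length_append, hLlen,
      List.length_reverse, hMlen] at h1

end Y

set_option maxHeartbeats 2000000 in
/-- If `μ_{n_m}^J(B(x,ρ)) ≥ exp(n_m γ)` along a non-lacunary strictly increasing
sequence `(n_m)`, then `liminf (1/n) log μ_n^J(B(x,δ)) ≥ γ` for every `δ > ρ`. -/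
theorem liminf_ball_lower_bound {d : ℕ} (hd : 3 ≤ d) {Ω : Type*}
    [MeasurableSpace Ω] (P : Measure Ω) [IsProbabilityMeasure P]
    (X : ℕ → Ω → FP d) (hX : ∀ i ω, X i ω ∈ genSet d)
    (Y : ℕ → Ω → FP d)
    (hY : ∀ n ω, Y n ω = ((List.range n).map (fun k => X (k + 1) ω)).prod)
    {j : ℕ} (t : Fin j → ℝ) (ht0 : ∀ i, 0 < t i) (ht1 : ∀ i, t i ≤ 1)
    (htmono : StrictMono t)
    (ρ : ℝ) (hρ : 0 < ρ) (γ : ℝ) (x : Fin j → ℝ)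
    (nm : ℕ → ℕ) (hnm0 : ∀ m, 0 < nm m) (hmono : StrictMono nm)
    (hratio : Filter.Tendsto (fun m => (nm (m + 1) : ℝ) / (nm m : ℝ))
      Filter.atTop (nhds 1))
    (hlb : ∀ m : ℕ, 1 ≤ m →
      ENNReal.ofReal (Real.exp ((nm m : ℝ) * γ)) ≤
        P {ω | ∀ i, |(wl d (Y ⌊(nm m : ℝ) * t i⌋₊ ω) : ℝ) / (nm m) - x i| < ρ}) :
    ∀ δ : ℝ, ρ < δ →
      (γ : EReal) ≤
        Filter.liminf
          (fun n : ℕ => (((n : ℝ)⁻¹ : ℝ) : EReal) *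
            ENNReal.log
              (P {ω | ∀ i, |(wl d (Y ⌊(n : ℝ) * t i⌋₊ ω) : ℝ) / n - x i| < δ}))
          Filter.atTop := by
  intro δ hδ
  set f : ℕ → EReal := fun n : ℕ => (((n : ℝ)⁻¹ : ℝ) : EReal) *
      ENNReal.log (P {ω | ∀ i, |(wl d (Y ⌊(n : ℝ) * t i⌋₊ ω) : ℝ) / n - x i| < δ}) with hf
  have hδρ : (0 : ℝ) < δ - ρ := by linarith
  have main : ∀ ε : ℝ, 0 < ε → ((γ - ε : ℝ) : EReal) ≤ Filter.liminf f Filter.atTop := by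
    intro ε hε
    set η : ℝ := min ((δ - ρ) / 4) (ε / (|γ| + 1)) with hηdef
    have habs1 : (0 : ℝ) < |γ| + 1 := by positivity
    have hη0 : 0 < η := lt_min (by linarith) (by positivity)
    -- the ratio of consecutive nm's from below
    have hinv : Filter.Tendsto (fun mm => (nm mm : ℝ) / (nm (mm + 1) : ℝ))
        Filter.atTop (nhds 1) := by
      have h := hratio.inv₀ one_ne_zero
      simp only [inv_one] at h
      have : (fun mm => ((nm (mm + 1) : ℝ) / (nm mm : ℝ))⁻¹)
          = fun mm => (nm mm : ℝ) / (nm (mm + 1) : ℝ) := by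
        funext mm; rw [inv_div]
      rwa [this] at h
    have hev : ∀ᶠ mm in Filter.atTop, 1 - η < (nm mm : ℝ) / (nm (mm + 1) : ℝ) :=
      hinv.eventually (eventually_gt_nhds (by linarith))
    obtain ⟨M₀, hM₀⟩ := Filter.eventually_atTop.mp hev
    set M : ℕ := max M₀ 1 with hMdef
    obtain ⟨N₁, hN₁⟩ := exists_nat_gt (2 / (δ - ρ))
    refine Filter.le_liminf_of_le (by isBoundedDefault) ?_
    filter_upwards [Filter.eventually_ge_atTop (max (nm M) N₁)] with n hn
    have hnM : nm M ≤ n := le_trans (le_max_left _ _) hn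
    have hnN₁ : N₁ ≤ n := le_trans (le_max_right _ _) hn
    have hMn : M ≤ n := le_trans hmono.le_apply hnM
    -- choose m maximal with nm m ≤ n
    set m : ℕ := Nat.findGreatest (fun k => nm k ≤ n) n with hmdef
    have hm1 : nm m ≤ n := Nat.findGreatest_spec (P := fun k => nm k ≤ n) hMn hnM
    have hMm : M ≤ m := Nat.le_findGreatest (P := fun k => nm k ≤ n) hMn hnM
    have hm2 : n < nm (m + 1) := by
      by_contra h
      push_neg at h
      by_cases hc : m + 1 ≤ n
      · exact (Nat.findGreatest_is_greatest (lt_add_one m) hc) h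
      · push_neg at hc
        have := hmono.le_apply (x := m + 1)
        omega
    have hm1' : 1 ≤ m := le_trans (le_max_right M₀ 1) hMm
    have hmM₀ : M₀ ≤ m := le_trans (le_max_left M₀ 1) hMm
    set u : ℝ := (nm m : ℝ) with hu
    set v : ℝ := (n : ℝ) with hv
    have hu0 : (0 : ℝ) < u := by rw [hu]; exact_mod_cast hnm0 m
    have huv : u ≤ v := by rw [hu, hv]; exact_mod_cast hm1
    have hv0 : (0 : ℝ) < v := lt_of_lt_of_le hu0 huv
    have hclose : 1 - η < u / v := by
      have h1 : 1 - η < (nm m : ℝ) / (nm (m + 1) : ℝ) := hM₀ m hmM₀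
      have h2 : (nm m : ℝ) / (nm (m + 1) : ℝ) ≤ u / v := by
        apply div_le_div_of_nonneg_left hu0.le hv0
        rw [hv]; exact_mod_cast hm2.le
      linarith
    have huv1 : u / v ≤ 1 := by
      rw [div_le_one hv0]; exact huv
    have hvN₁ : 2 / (δ - ρ) < v := lt_of_lt_of_le hN₁ (by rw [hv]; exact_mod_cast hnN₁)
    have hinvv : 1 / v < (δ - ρ) / 2 := by
      rw [div_lt_iff₀ hv0]
      rw [div_lt_iff₀ hδρ] at hvN₁
      nlinarith
    have hsm : 2 * (1 - u / v) + 1 / v < δ - ρ := by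
      have hη1 : η ≤ (δ - ρ) / 4 := min_le_left _ _
      linarith
    -- set inclusion
    have hsub : {ω | ∀ i, |(wl d (Y ⌊(nm m : ℝ) * t i⌋₊ ω) : ℝ) / (nm m) - x i| < ρ}
        ⊆ {ω | ∀ i, |(wl d (Y ⌊(n : ℝ) * t i⌋₊ ω) : ℝ) / n - x i| < δ} := by
      intro ω hω i
      have hi : |(wl d (Y ⌊u * t i⌋₊ ω) : ℝ) / u - x i| < ρ := hω i
      have hti0 : (0 : ℝ) ≤ t i := (ht0 i).le
      have hBA : ⌊u * t i⌋₊ ≤ ⌊v * t i⌋₊ :=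
        Nat.floor_mono (mul_le_mul_of_nonneg_right huv hti0)
      obtain ⟨h1, h2⟩ := wl_Y_diff X hX Y hY ω hBA
      set A : ℕ := ⌊v * t i⌋₊ with hA
      set B : ℕ := ⌊u * t i⌋₊ with hB
      set a : ℝ := (wl d (Y A ω) : ℝ) with ha
      set b : ℝ := (wl d (Y B ω) : ℝ) with hb
      have hb0 : (0 : ℝ) ≤ b := Nat.cast_nonneg _
      have hbB : b ≤ (B : ℝ) := by rw [hb]; exact_mod_cast wl_Y_le X hX Y hY B ω
      have hBu : (B : ℝ) ≤ u * t i := Nat.floor_le (mul_nonneg hu0.le hti0)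
      have hbu : b ≤ u := by nlinarith [ht1 i]
      have hAv : (A : ℝ) ≤ v * t i := Nat.floor_le (mul_nonneg hv0.le hti0)
      have hBlow : u * t i < (B : ℝ) + 1 := Nat.lt_floor_add_one _
      have hABr : (A : ℝ) - (B : ℝ) ≤ (v - u) + 1 := by
        nlinarith [ht1 i, mul_nonneg (sub_nonneg.mpr huv) (sub_nonneg.mpr (ht1 i))]
      have hcast1 : a ≤ b + ((A : ℝ) - (B : ℝ)) := by
        have := (Nat.cast_le (α := ℝ)).mpr h1
        push_cast [Nat.cast_sub hBA] at this
        linarith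
      have hcast2 : b ≤ a + ((A : ℝ) - (B : ℝ)) := by
        have := (Nat.cast_le (α := ℝ)).mpr h2
        push_cast [Nat.cast_sub hBA] at this
        linarith
      have habd : |a - b| ≤ (v - u) + 1 := by
        rw [abs_le]
        constructor <;> linarith
      obtain ⟨habd1, habd2⟩ := abs_le.mp habd
      have hnum : |a * u - b * v| ≤ (2 * (v - u) + 1) * u := by
        rw [abs_le]
        constructor
        · nlinarith [mul_le_mul_of_nonneg_right hbu (sub_nonneg.mpr huv)]
        · nlinarith [mul_nonneg hb0 (sub_nonneg.mpr huv)]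
      have hdiff : |a / v - b / u| < δ - ρ := by
        have heq : a / v - b / u = (a * u - b * v) / (v * u) := by
          field_simp
        rw [heq, abs_div, abs_of_pos (mul_pos hv0 hu0), div_lt_iff₀ (mul_pos hv0 hu0)]
        have h2' : 2 * (v - u) + 1 < (δ - ρ) * v := by
          have hrw : 2 * (1 - u / v) + 1 / v = (2 * (v - u) + 1) / v := by
            field_simp
          rw [hrw, div_lt_iff₀ hv0] at hsm
          linarith
        calc |a * u - b * v| ≤ (2 * (v - u) + 1) * u := hnum
          _ < ((δ - ρ) * v) * u := mul_lt_mul_of_pos_right h2' hu0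
          _ = (δ - ρ) * (v * u) := by ring
      have htri : |a / v - x i| ≤ |a / v - b / u| + |b / u - x i| := abs_sub_le _ _ _
      show |(wl d (Y ⌊v * t i⌋₊ ω) : ℝ) / v - x i| < δ
      rw [← hA, ← ha]
      linarith
    -- probability bound
    have hP : ENNReal.ofReal (Real.exp (u * γ)) ≤
        P {ω | ∀ i, |(wl d (Y ⌊(n : ℝ) * t i⌋₊ ω) : ℝ) / n - x i| < δ} :=
      le_trans (hlb m hm1') (measure_mono hsub)
    have hlog : ((u * γ : ℝ) : EReal) ≤
        ENNReal.log (P {ω | ∀ i, |(wl d (Y ⌊(n : ℝ) * t i⌋₊ ω) : ℝ) / n - x i| < δ}) := by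
      have h1 := ENNReal.log_monotone hP
      rwa [ENNReal.log_ofReal_of_pos (Real.exp_pos _), Real.log_exp] at h1
    have hreal : γ - ε ≤ v⁻¹ * (u * γ) := by
      have h1uv : 0 ≤ 1 - u / v := by linarith
      have hηε : η ≤ ε / (|γ| + 1) := min_le_right _ _
      have hbd : (1 - u / v) * γ ≤ ε := by
        have e1 : (1 - u / v) * γ ≤ (1 - u / v) * |γ| :=
          mul_le_mul_of_nonneg_left (le_abs_self γ) h1uv
        have e2 : (1 - u / v) * |γ| ≤ η * |γ| :=
          mul_le_mul_of_nonneg_right (by linarith) (abs_nonneg γ)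
        have e3 : η * |γ| ≤ (ε / (|γ| + 1)) * |γ| :=
          mul_le_mul_of_nonneg_right hηε (abs_nonneg γ)
        have e4 : (ε / (|γ| + 1)) * |γ| ≤ ε := by
          rw [div_mul_eq_mul_div, div_le_iff₀ habs1]
          nlinarith [abs_nonneg γ]
        linarith
      have : v⁻¹ * (u * γ) = (u / v) * γ := by
        field_simp
      rw [this]
      nlinarith
    have hpos : (0 : EReal) ≤ (((n : ℝ)⁻¹ : ℝ) : EReal) := by
      apply EReal.coe_nonneg.mpr
      positivity
    calc ((γ - ε : ℝ) : EReal) ≤ ((v⁻¹ * (u * γ) : ℝ) : EReal) := EReal.coe_le_coe_iff.mpr hreal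
      _ = ((v⁻¹ : ℝ) : EReal) * ((u * γ : ℝ) : EReal) := EReal.coe_mul _ _
      _ ≤ f n := mul_le_mul_of_nonneg_left hlog hpos
  -- conclude
  apply le_of_forall_lt
  intro c hc
  induction c using EReal.rec with
  | bot =>
    have h1 := main 1 one_pos
    exact lt_of_lt_of_le (EReal.bot_lt_coe _) h1
  | coe r =>
    have hr : r < γ := EReal.coe_lt_coe_iff.mp hc
    have h1 := main ((γ - r) / 2) (by linarith)
    refine lt_of_lt_of_le ?_ h1
    apply EReal.coe_lt_coe_iff.mpr
    linarith
  | top => exact absurd hc (not_lt.mpr le_top)
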